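/- For every n, the collection of valid notions of n-estimators is a directed (downward) family under inclusion: any two valid notions have a common valid refinement (namely their intersection), and consequently any finite collection of valid notions of n-estimators has nonempty intersection which is itself a valid notion. -/

import Mathlib

/-- The type of level-`n` estimators: a 0-estimator is a pair of naturals,
and an `(n+1)`-estimator is a set (required to be finite by validity) of `n`-estimators. -/
def Est : ℕ → Type := fun n => Nat.rec (ℕ × ℕ) (fun _ ih => Set ih) n

/-- Validity of a notion of `n`-estimators (Definition 6.3). -/
def EstValid : (n : ℕ) → Set (Est n) → Prop := fun n =>
  Nat.rec (motive := fun n => Set (Est n) → Prop)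
    (fun R => ∃ amin : ℕ, ∃ f : ℕ → ℕ, ∀ a b : ℕ,
      ((a, b) : ℕ × ℕ) ∈ R ↔ amin ≤ a ∧ f a ≤ b)
    (fun n ih R =>
      (∀ x ∈ R, Set.Finite (show Set (Est n) from x)) ∧
      ih (⋃₀ (show Set (Set (Est n)) from R)) ∧
      (∀ x ∈ R, ∀ y ∈ ⋃₀ (show Set (Set (Est n)) from R),
        (show Set (Est n) from x) ∪ {y} ∈ R) ∧
      (∀ S : Set (Est n), ih S → ∃ r ∈ R, (show Set (Est n) from r) ⊆ S))
    n

theorem estValid_succ_iff (n : ℕ) (R : Set (Set (Est n))) :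
    EstValid (n+1) R ↔
      (∀ x ∈ R, Set.Finite x) ∧
      EstValid n (⋃₀ R) ∧
      (∀ x ∈ R, ∀ y ∈ ⋃₀ R, x ∪ {y} ∈ R) ∧
      (∀ S : Set (Est n), EstValid n S → ∃ r ∈ R, r ⊆ S) := Iff.rfl

theorem est_union_mem {α : Type} (R : Set (Set α))
    (hcl : ∀ x ∈ R, ∀ y ∈ ⋃₀ R, x ∪ {y} ∈ R)
    (x : Set α) (hx : x ∈ R) (s : Set α) (hs : s.Finite) (hsub : s ⊆ ⋃₀ R) :
    x ∪ s ∈ R := by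
  revert hsub
  refine Set.Finite.induction_on (motive := fun s _ => s ⊆ ⋃₀ R → x ∪ s ∈ R) s hs ?_ ?_
  · intro _; simpa using hx
  · intro y s hy hsfin ih hsub
    have h1 : x ∪ s ∈ R := ih (fun z hz => hsub (Set.mem_insert_of_mem _ hz))
    have h2 := hcl _ h1 y (hsub (Set.mem_insert _ _))
    have he : x ∪ insert y s = (x ∪ s) ∪ {y} := by
      rw [Set.union_insert, Set.union_singleton]
    rw [he]; exact h2

theorem estValid_nonempty : ∀ n (R : Set (Est n)), EstValid n R → R.Nonempty := by
  intro n; cases n with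
  | zero =>
    rintro R ⟨amin, f, h⟩
    exact ⟨(amin, f amin), (h amin (f amin)).2 ⟨le_refl _, le_refl _⟩⟩
  | succ n =>
    intro R hR
    obtain ⟨-, hU, -, hsub⟩ := (estValid_succ_iff n R).mp hR
    obtain ⟨r, hr, -⟩ := hsub _ hU
    exact ⟨r, hr⟩

theorem estValid_inter : ∀ n (R S : Set (Est n)), EstValid n R → EstValid n S →
    EstValid n (R ∩ S) := by
  intro n
  induction n with
  | zero =>
    rintro R S ⟨ar, fr, hr⟩ ⟨as, fs, hs⟩
    refine ⟨max ar as, fun a => max (fr a) (fs a), fun a b => ?_⟩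
    show (a, b) ∈ R ∧ (a, b) ∈ S ↔ _
    rw [hr, hs, max_le_iff, max_le_iff]
    tauto
  | succ n ih =>
    intro R S hR hS
    change Set (Set (Est n)) at R S
    obtain ⟨hRf, hRU, hRc, hRs⟩ := (estValid_succ_iff n R).mp hR
    obtain ⟨hSf, hSU, hSc, hSs⟩ := (estValid_succ_iff n S).mp hS
    have key : ∀ S' : Set (Est n), EstValid n S' → ∃ t ∈ R ∩ S, t ⊆ S' := by
      intro S' hS'
      have hT : EstValid n (S' ∩ (⋃₀ R ∩ ⋃₀ S)) := ih _ _ hS' (ih _ _ hRU hSU)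
      obtain ⟨r, hrR, hrT⟩ := hRs _ hT
      obtain ⟨s, hsS, hsT⟩ := hSs _ hT
      have hrsR : r ∪ s ∈ R :=
        est_union_mem R hRc r hrR s (hSf s hsS) (fun z hz => (hsT hz).2.1)
      have hsrS : s ∪ r ∈ S :=
        est_union_mem S hSc s hsS r (hRf r hrR) (fun z hz => (hrT hz).2.2)
      refine ⟨r ∪ s, ⟨hrsR, by rwa [Set.union_comm]⟩, ?_⟩
      exact Set.union_subset (fun z hz => (hrT hz).1) (fun z hz => (hsT hz).1)
    refine (estValid_succ_iff n (R ∩ S)).mpr ⟨?_, ?_, ?_, ?_⟩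
    · exact fun x hx => hRf x hx.1
    · have hU : ⋃₀ (R ∩ S) = ⋃₀ R ∩ ⋃₀ S := by
        apply subset_antisymm
        · exact Set.subset_inter (Set.sUnion_mono Set.inter_subset_left)
            (Set.sUnion_mono Set.inter_subset_right)
        · rintro y ⟨hyR, hyS⟩
          obtain ⟨t, ⟨htR, htS⟩, -⟩ := key _ (ih _ _ hRU hSU)
          exact ⟨t ∪ {y}, ⟨hRc t htR y hyR, hSc t htS y hyS⟩,
            Set.mem_union_right _ rfl⟩
      rw [hU]; exact ih _ _ hRU hSU
    · intro x hx y hy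
      have hyR : y ∈ ⋃₀ R := Set.sUnion_mono Set.inter_subset_left hy
      have hyS : y ∈ ⋃₀ S := Set.sUnion_mono Set.inter_subset_right hy
      exact ⟨hRc x hx.1 y hyR, hSc x hx.2 y hyS⟩
    · exact key

theorem estValid_sInter : ∀ n (C : Set (Set (Est n))), C.Finite → C.Nonempty →
    (∀ R ∈ C, EstValid n R) → EstValid n (⋂₀ C) := by
  intro n C hC
  refine Set.Finite.induction_on
    (motive := fun C _ => C.Nonempty → (∀ R ∈ C, EstValid n R) → EstValid n (⋂₀ C)) C hC ?_ ?_
  · rintro ⟨x, hx⟩ _; exact absurd hx (Set.notMem_empty x)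
  · intro R C hR hCfin ih _ hval
    rcases C.eq_empty_or_nonempty with rfl | hCne
    · simpa using hval R (Set.mem_insert _ _)
    · rw [Set.sInter_insert]
      exact estValid_inter n _ _ (hval R (Set.mem_insert _ _))
        (ih hCne (fun R' hR' => hval R' (Set.mem_insert_of_mem _ hR')))

/-- The valid notions of `n`-estimators form a downward-directed family under inclusion:
any two valid notions have a common valid refinement (their intersection), and consequently
any finite nonempty collection of valid notions has a nonempty intersection which is itself
a valid notion. -/
theorem estValid_directed :
    (∀ n : ℕ, ∀ R S : Set (Est n), EstValid n R → EstValid n S →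
      ∃ T : Set (Est n), EstValid n T ∧ T ⊆ R ∧ T ⊆ S) ∧
    (∀ n : ℕ, ∀ C : Set (Set (Est n)), C.Finite → C.Nonempty →
      (∀ R ∈ C, EstValid n R) → EstValid n (⋂₀ C) ∧ (⋂₀ C).Nonempty) := by
  constructor
  · intro n R S hR hS
    exact ⟨R ∩ S, estValid_inter n R S hR hS, Set.inter_subset_left, Set.inter_subset_right⟩
  · intro n C hfin hne hval
    have h := estValid_sInter n C hfin hne hval
    exact ⟨h, estValid_nonempty n _ h⟩
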